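/- arXiv:2507.14511 — 2 statements merged into one kernel-verified Lean document; each statement's English description precedes it below -/
import Mathlib

section
/- Let Ψ : ℝ^{N-1} → ℝ be L-Lipschitz and let E_Ψ = {(x', x_N) : x_N > Ψ(x')}. For x ∈ E_Ψ and λ ≥ 0, writing x_λ = x + λ e_N, one has dist(x_λ, ∂E_Ψ) ≥ dist(x, ∂E_Ψ)·cos γ + λ·cos γ, where γ = arctan L. -/
open Metric Set MeasureTheory Filter

noncomputable section

/-- `Euc n` is Euclidean space `ℝ^n`. -/
abbrev Euc (n : ℕ) := EuclideanSpace ℝ (Fin n)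

/-- A function is harmonic on a set if it is `C²` there and its Laplacian vanishes. -/
def HarmonicOnSet {m : ℕ} (f : Euc m → ℝ) (s : Set (Euc m)) : Prop :=
  ContDiffOn ℝ 2 f s ∧ ∀ x ∈ s,
    ∑ i : Fin m, fderiv ℝ (fun y => fderiv ℝ f y (EuclideanSpace.single i 1)) x
      (EuclideanSpace.single i 1) = 0

/-- The constant `K_N = 2 m_{N-1}(B^{N-1}) / m_N(B^N)` (here `N = n+1`). -/
def Kconst (n : ℕ) : ℝ :=
  2 * (volume (ball (0 : Euc n) 1)).toReal / (volume (ball (0 : Euc (n+1)) 1)).toReal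

/-- the projection of `ℝ^{n+1}` onto the first `n` coordinates -/
def proj {n : ℕ} (x : Euc (n+1)) : Euc n := WithLp.toLp 2 (fun i : Fin n => x i.castSucc)

/-- the last standard basis vector `e_N` in `ℝ^{n+1}` -/
def eN (n : ℕ) : Euc (n+1) := EuclideanSpace.single (Fin.last n) 1

/-- the strict epigraph of `Ψ : ℝ^n → ℝ` -/
def epigraph {n : ℕ} (Ψ : Euc n → ℝ) : Set (Euc (n+1)) :=
  {x | Ψ (proj x) < x (Fin.last n)}

/-- the point obtained from `x` by replacing its last coordinate with `t` -/
def vmove {n : ℕ} (x : Euc (n+1)) (t : ℝ) : Euc (n+1) :=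
  x + (t - x (Fin.last n)) • eN n

/-- the vertical Hölder condition of order `α` with constant `C` -/
def VertHolder {n : ℕ} (Ψ : Euc n → ℝ) (U : Euc (n+1) → ℝ) (C α : ℝ) : Prop :=
  ∀ x ∈ epigraph Ψ, ∀ t : ℝ, Ψ (proj x) < t →
    |U x - U (vmove x t)| ≤ C * |x (Fin.last n) - t| ^ α


lemma proj_add_smul {n : ℕ} (x : Euc (n+1)) (c : ℝ) : proj (x + c • eN n) = proj x := by
  ext i
  simp [proj, eN, EuclideanSpace.single_apply, (Fin.castSucc_lt_last i).ne]

lemma last_add_smul {n : ℕ} (x : Euc (n+1)) (c : ℝ) :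
    (x + c • eN n) (Fin.last n) = x (Fin.last n) + c := by
  simp [eN, EuclideanSpace.single_apply]

lemma norm_sq_split {n : ℕ} (w : Euc (n+1)) :
    ‖w‖^2 = ‖proj w‖^2 + (w (Fin.last n))^2 := by
  have h1 : ‖w‖^2 = ∑ i, ‖w i‖^2 := by
    rw [EuclideanSpace.norm_eq]
    rw [Real.sq_sqrt (by positivity)]
  have h2 : ‖proj w‖^2 = ∑ i : Fin n, ‖w i.castSucc‖^2 := by
    rw [EuclideanSpace.norm_eq]
    rw [Real.sq_sqrt (by positivity)]
    rfl
  rw [h1, h2, Fin.sum_univ_castSucc]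
  simp [sq_abs]

lemma proj_sub {n : ℕ} (x y : Euc (n+1)) : proj (x - y) = proj x - proj y := by
  ext i; simp [proj]

lemma contΨ {n : ℕ} (L : ℝ) (hL : 0 ≤ L) (Ψ : Euc n → ℝ)
    (hΨ : ∀ x y, |Ψ x - Ψ y| ≤ L * ‖x - y‖) : Continuous Ψ := by
  apply (LipschitzWith.of_dist_le_mul (K := L.toNNReal) (f := Ψ) ?_).continuous
  intro a b
  rw [Real.coe_toNNReal _ hL, Real.dist_eq, dist_eq_norm]
  exact hΨ a b

lemma cont_proj {n : ℕ} : Continuous (proj (n := n)) := by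
  apply (LipschitzWith.of_dist_le_mul (K := 1) (f := proj (n := n)) ?_).continuous
  intro a b
  rw [dist_eq_norm, dist_eq_norm, ← proj_sub]
  push_cast
  rw [one_mul]
  have h := norm_sq_split (a - b)
  nlinarith [norm_nonneg (proj (a - b)), norm_nonneg (a - b), sq_nonneg ((a-b) (Fin.last n))]

lemma cont_last {n : ℕ} : Continuous (fun x : Euc (n+1) => x (Fin.last n)) :=
  (EuclideanSpace.proj (Fin.last n) : Euc (n+1) →L[ℝ] ℝ).continuous

lemma cont_f {n : ℕ} (L : ℝ) (hL : 0 ≤ L) (Ψ : Euc n → ℝ)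
    (hΨ : ∀ x y, |Ψ x - Ψ y| ≤ L * ‖x - y‖) :
    Continuous (fun x : Euc (n+1) => x (Fin.last n) - Ψ (proj x)) :=
  cont_last.sub ((contΨ L hL Ψ hΨ).comp cont_proj)

lemma frontier_graph {n : ℕ} (L : ℝ) (hL : 0 ≤ L) (Ψ : Euc n → ℝ)
    (hΨ : ∀ x y, |Ψ x - Ψ y| ≤ L * ‖x - y‖) :
    ∀ y ∈ frontier (epigraph Ψ), Ψ (proj y) = y (Fin.last n) := by
  intro y hy
  have hf := cont_f L hL Ψ hΨ
  have hpre : epigraph Ψ = (fun x : Euc (n+1) => x (Fin.last n) - Ψ (proj x)) ⁻¹' Ioi 0 := by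
    ext z; simp [epigraph, sub_pos]
  have hopen : IsOpen (epigraph Ψ) := by
    rw [hpre]; exact isOpen_Ioi.preimage hf
  have hcl : closure (epigraph Ψ) ⊆
      (fun x : Euc (n+1) => x (Fin.last n) - Ψ (proj x)) ⁻¹' Ici 0 := by
    apply closure_minimal _ (isClosed_Ici.preimage hf)
    rw [hpre]; exact preimage_mono Ioi_subset_Ici_self
  rw [frontier, hopen.interior_eq] at hy
  have h1 : 0 ≤ y (Fin.last n) - Ψ (proj y) := hcl hy.1
  have h2 : ¬ Ψ (proj y) < y (Fin.last n) := hy.2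
  linarith [not_lt.mp h2]

lemma graph_mem_frontier {n : ℕ} (L : ℝ) (hL : 0 ≤ L) (Ψ : Euc n → ℝ)
    (hΨ : ∀ x y, |Ψ x - Ψ y| ≤ L * ‖x - y‖)
    (z : Euc (n+1)) (hz : Ψ (proj z) = z (Fin.last n)) :
    z ∈ frontier (epigraph Ψ) := by
  constructor
  · rw [Metric.mem_closure_iff]
    intro ε hε
    refine ⟨z + (ε/2) • eN n, ?_, ?_⟩
    · show Ψ (proj _) < _
      rw [proj_add_smul, last_add_smul, hz]
      linarith
    · rw [dist_self_add_right, norm_smul]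
      simp [eN, EuclideanSpace.norm_single, abs_of_pos (by linarith : (0:ℝ) < ε/2)]
      rw [abs_of_pos hε]
      linarith
  · intro hmem
    have := interior_subset hmem
    simp only [epigraph, mem_setOf_eq, hz] at this
    exact lt_irrefl _ this

lemma key_dist {n : ℕ} (L : ℝ) (hL : 0 ≤ L) (Ψ : Euc n → ℝ)
    (hΨ : ∀ x y, |Ψ x - Ψ y| ≤ L * ‖x - y‖)
    (x : Euc (n+1)) (y : Euc (n+1)) (hy : Ψ (proj y) = y (Fin.last n)) :
    (x (Fin.last n) - Ψ (proj x)) / Real.sqrt (1 + L^2) ≤ dist x y := by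
  set a := x (Fin.last n) - y (Fin.last n) with ha
  set b := ‖proj x - proj y‖ with hb
  have hb0 : 0 ≤ b := norm_nonneg _
  have hbound : x (Fin.last n) - Ψ (proj x) ≤ a + L * b := by
    have := hΨ (proj y) (proj x)
    have h1 : Ψ (proj y) - Ψ (proj x) ≤ L * ‖proj y - proj x‖ :=
      (abs_le.mp this).2.trans_eq rfl
    rw [norm_sub_rev] at h1
    linarith [h1]
  have hnorm : dist x y = Real.sqrt (b^2 + a^2) := by
    rw [dist_eq_norm]
    have := norm_sq_split (x - y)
    rw [proj_sub] at this
    have hxy : (x - y) (Fin.last n) = a := by simp [ha]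
    rw [hxy] at this
    rw [← hb] at this
    rw [← Real.sqrt_sq (norm_nonneg (x - y)), this]
  have hs : Real.sqrt (1 + L^2) > 0 := Real.sqrt_pos.mpr (by positivity)
  rw [div_le_iff₀ hs, hnorm]
  have ht : 0 ≤ Real.sqrt (b^2 + a^2) := Real.sqrt_nonneg _
  have hts : (Real.sqrt (b^2 + a^2))^2 = b^2 + a^2 := Real.sq_sqrt (by positivity)
  have hss : (Real.sqrt (1 + L^2))^2 = 1 + L^2 := Real.sq_sqrt (by positivity)
  have key : a + L * b ≤ Real.sqrt (b^2 + a^2) * Real.sqrt (1 + L^2) := by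
    nlinarith [sq_nonneg (L * a - b), sq_nonneg (Real.sqrt (b^2 + a^2) * Real.sqrt (1 + L^2) - (a + L*b)), mul_nonneg ht hs.le, sq_nonneg (a + L * b)]
  linarith

/-- The distance-from-the-boundary lemma for vertical translates in the epigraph of a
Lipschitz function. -/
theorem stmt2 {n : ℕ} (L : ℝ) (hL : 0 ≤ L) (Ψ : Euc n → ℝ)
    (hΨ : ∀ x y, |Ψ x - Ψ y| ≤ L * ‖x - y‖)
    (x : Euc (n+1)) (hx : x ∈ epigraph Ψ) (lam : ℝ) (hlam : 0 ≤ lam) :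
    infDist (x + lam • eN n) (frontier (epigraph Ψ)) ≥
      infDist x (frontier (epigraph Ψ)) * Real.cos (Real.arctan L)
        + lam * Real.cos (Real.arctan L) := by
  have hcγ : Real.cos (Real.arctan L) = 1 / Real.sqrt (1 + L^2) := by
    rw [Real.cos_arctan]
  have hcpos : 0 < Real.cos (Real.arctan L) := by
    rw [hcγ]; positivity
  set F := frontier (epigraph Ψ) with hF
  set d := x (Fin.last n) - Ψ (proj x) with hd
  have hd0 : 0 < d := sub_pos.mpr hx
  set z := x + (Ψ (proj x) - x (Fin.last n)) • eN n with hzdef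
  have hzgraph : Ψ (proj z) = z (Fin.last n) := by
    rw [hzdef, proj_add_smul, last_add_smul]; ring
  have hzF : z ∈ F := graph_mem_frontier L hL Ψ hΨ z hzgraph
  have hFne : F.Nonempty := ⟨z, hzF⟩
  have hdistxz : dist x z = d := by
    rw [hzdef, dist_self_add_right, norm_smul]
    simp [eN, EuclideanSpace.norm_single]
    rw [abs_sub_comm, abs_of_pos hd0]
  have hinfx : infDist x F ≤ d := hdistxz ▸ infDist_le_dist_of_mem hzF
  have hlow : (d + lam) / Real.sqrt (1 + L^2) ≤ infDist (x + lam • eN n) F := by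
    by_contra hcon
    push_neg at hcon
    obtain ⟨y, hy, hlt⟩ := (infDist_lt_iff hFne).mp hcon
    have hk := key_dist L hL Ψ hΨ (x + lam • eN n) y (frontier_graph L hL Ψ hΨ y hy)
    rw [last_add_smul, proj_add_smul] at hk
    have heq : x (Fin.last n) + lam - Ψ (proj x) = d + lam := by rw [hd]; ring
    rw [heq] at hk
    exact absurd hk (not_le.mpr hlt)
  have h2 : infDist x F * Real.cos (Real.arctan L) + lam * Real.cos (Real.arctan L)
      ≤ (d + lam) * Real.cos (Real.arctan L) := by nlinarith
  have h3 : (d + lam) * Real.cos (Real.arctan L) = (d + lam) / Real.sqrt (1 + L^2) := by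
    rw [hcγ]; ring
  exact le_trans (h2.trans h3.le) hlow
end
end

section
/- Let Ψ : ℝ^{N-1} → ℝ be L-Lipschitz with strict epigraph E_Ψ. Then for every x = (x', x_N) ∈ E_Ψ, the vertical distance x_N − Ψ(x') satisfies dist(x, ∂E_Ψ) ≥ (x_N − Ψ(x'))·cos(arctan L) = (x_N − Ψ(x'))/√(1+L²). -/
open Metric Set MeasureTheory Filter

noncomputable section

lemma vmove_last {n : ℕ} (x : Euc (n+1)) (t : ℝ) : vmove x t (Fin.last n) = t := by
  simp [vmove, eN, EuclideanSpace.single_apply]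

lemma proj_vmove {n : ℕ} (x : Euc (n+1)) (t : ℝ) : proj (vmove x t) = proj x := by
  ext i
  simp [proj, vmove, eN, EuclideanSpace.single_apply, (Fin.castSucc_lt_last i).ne]

lemma psi_cont {n : ℕ} {L : ℝ} (hL : 0 ≤ L) {Ψ : Euc n → ℝ}
    (hΨ : ∀ x y, |Ψ x - Ψ y| ≤ L * ‖x - y‖) : Continuous Ψ := by
  have : LipschitzWith (Real.toNNReal L) Ψ := by
    apply LipschitzWith.of_dist_le_mul
    intro a b
    rw [Real.dist_eq, dist_eq_norm, Real.coe_toNNReal _ hL]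
    exact hΨ a b
  exact this.continuous

lemma epi_open {n : ℕ} {Ψ : Euc n → ℝ} (hc : Continuous Ψ) : IsOpen (epigraph Ψ) := by
  have hproj : Continuous (proj (n := n)) := by
    unfold proj; fun_prop
  have : epigraph Ψ = (fun x : Euc (n+1) => x (Fin.last n) - Ψ (proj x)) ⁻¹' Ioi 0 := by
    ext y; simp [epigraph, sub_pos]
  rw [this]
  exact ((PiLp.continuous_apply 2 _ (Fin.last n)).sub (hc.comp hproj)).isOpen_preimage _ isOpen_Ioi

lemma norm_split {n : ℕ} (x y : Euc (n+1)) :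
    ‖x - y‖ ^ 2 = ‖proj x - proj y‖ ^ 2 + (x (Fin.last n) - y (Fin.last n)) ^ 2 := by
  rw [EuclideanSpace.norm_eq, EuclideanSpace.norm_eq,
    Real.sq_sqrt (by positivity), Real.sq_sqrt (by positivity)]
  rw [Fin.sum_univ_castSucc]
  have h1 : ∀ i : Fin n, ‖(x - y) i.castSucc‖ ^ 2 = ‖(proj x - proj y) i‖ ^ 2 := by
    intro i; simp [proj]
  have h2 : ‖(x - y) (Fin.last n)‖ ^ 2 = (x (Fin.last n) - y (Fin.last n)) ^ 2 := by
    simp [Real.norm_eq_abs, sq_abs]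
  rw [Finset.sum_congr rfl fun i _ => h1 i, h2]

/-- The distance to the boundary of the epigraph is at least the vertical distance times
`cos (arctan L) = 1/√(1+L²)`. -/
theorem stmt3 {n : ℕ} (L : ℝ) (hL : 0 ≤ L) (Ψ : Euc n → ℝ)
    (hΨ : ∀ x y, |Ψ x - Ψ y| ≤ L * ‖x - y‖)
    (x : Euc (n+1)) (hx : x ∈ epigraph Ψ) :
    infDist x (frontier (epigraph Ψ)) ≥
      (x (Fin.last n) - Ψ (proj x)) * Real.cos (Real.arctan L)
    ∧ Real.cos (Real.arctan L) = 1 / Real.sqrt (1 + L ^ 2) := by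
  have hcos := Real.cos_arctan L
  refine ⟨?_, hcos⟩
  have hc : Continuous Ψ := psi_cont hL hΨ
  have hopen := epi_open (Ψ := Ψ) hc
  set d := x (Fin.last n) - Ψ (proj x) with hd
  have hd0 : 0 < d := sub_pos.mpr hx
  have hs1 : 0 < Real.sqrt (1 + L ^ 2) := Real.sqrt_pos.mpr (by positivity)
  -- frontier nonempty
  set z := vmove x (Ψ (proj x)) with hz
  have hzc : z ∈ closure (epigraph Ψ) := by
    have htend : Tendsto (fun t => vmove x t) (nhdsWithin (Ψ (proj x)) (Ioi (Ψ (proj x)))) (nhds z) := by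
      have : Continuous fun t : ℝ => vmove x t := by
        unfold vmove
        exact continuous_const.add ((continuous_id.sub continuous_const).smul continuous_const)
      exact (this.tendsto _).mono_left nhdsWithin_le_nhds
    refine mem_closure_of_tendsto htend ?_
    filter_upwards [self_mem_nhdsWithin] with t ht
    simp only [epigraph, mem_setOf_eq, vmove_last, proj_vmove]
    exact ht
  have hzf : z ∈ frontier (epigraph Ψ) := by
    rw [frontier, hopen.interior_eq]
    refine ⟨hzc, ?_⟩
    simp [hz, epigraph, vmove_last, proj_vmove]
  have hne : (frontier (epigraph Ψ)).Nonempty := ⟨z, hzf⟩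
  -- lower bound on dist to each frontier point
  have key : ∀ y ∈ frontier (epigraph Ψ), d / Real.sqrt (1 + L ^ 2) ≤ dist x y := by
    intro y hy
    have hyn : y (Fin.last n) ≤ Ψ (proj y) := by
      have : y ∉ epigraph Ψ := by
        intro hmem
        exact (hopen.frontier_eq ▸ hy).2 hmem
      exact le_of_not_gt this
    set a := |x (Fin.last n) - y (Fin.last n)| with ha
    set b := ‖proj x - proj y‖ with hb
    have ha0 : 0 ≤ a := abs_nonneg _
    have hb0 : 0 ≤ b := norm_nonneg _
    have h1 : d ≤ a + L * b := by
      have h2 : |Ψ (proj y) - Ψ (proj x)| ≤ L * b := by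
        have := hΨ (proj y) (proj x)
        rwa [show ‖proj y - proj x‖ = b by rw [hb, norm_sub_rev]] at this
      have : d = (x (Fin.last n) - y (Fin.last n)) + (y (Fin.last n) - Ψ (proj y)) + (Ψ (proj y) - Ψ (proj x)) := by ring
      rw [this]
      have := abs_le.mp h2
      have h3 := le_abs_self (x (Fin.last n) - y (Fin.last n))
      linarith
    have h4 : a + L * b ≤ Real.sqrt (1 + L ^ 2) * dist x y := by
      have hdist : dist x y = ‖x - y‖ := dist_eq_norm x y
      have hsq : ‖x - y‖ ^ 2 = b ^ 2 + a ^ 2 := by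
        rw [norm_split, sq_abs]
      have hnn : 0 ≤ ‖x - y‖ := norm_nonneg _
      have hcs : (a + L * b) ^ 2 ≤ (1 + L ^ 2) * ‖x - y‖ ^ 2 := by
        rw [hsq]; nlinarith [sq_nonneg (L * a - b), sq_nonneg (a - L * b)]
      have := Real.sqrt_le_sqrt hcs
      rw [Real.sqrt_sq (by positivity), Real.sqrt_mul (by positivity), Real.sqrt_sq hnn] at this
      rwa [hdist]
    calc d / Real.sqrt (1 + L ^ 2) ≤ (a + L * b) / Real.sqrt (1 + L ^ 2) := by
          gcongr
      _ ≤ dist x y := by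
          rw [div_le_iff₀ hs1]; linarith [h4]
  have : d / Real.sqrt (1 + L ^ 2) ≤ infDist x (frontier (epigraph Ψ)) := by
    rw [infDist_eq_iInf]
    haveI : Nonempty (frontier (epigraph Ψ)) := hne.to_subtype
    exact le_ciInf fun ⟨y, hy⟩ => key y hy
  rw [hcos]
  calc d * (1 / Real.sqrt (1 + L ^ 2)) = d / Real.sqrt (1 + L ^ 2) := by ring
    _ ≤ _ := this
end
end
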